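/- arXiv:math/0306236 — 2 statements merged into one kernel-verified Lean document; each statement's English description precedes it below -/
import Mathlib

section
/- Let R be a commutative ring, M an R-module, and y_1,...,y_r elements of R. Fix i > 0. Suppose that for every subset A of {1,...,r} and every s with max(A) < s ≤ r one has y_s · H_i(y_A; M) = 0, where H_i(y_A; M) denotes the i-th Koszul homology of M with respect to the elements indexed by A. Then for every subset A of {1,...,r}, the canonical map ∂ : H_{i+1}(y_A; M) → ⊕_{j ∈ A} H_i(y_{A∖{j}}; M), whose j-th component is the connecting map in the long exact sequence of Koszul homology, is injective. -/
open Finset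

section Koszul

variable {R : Type*} [CommRing R] {ι : Type*} [LinearOrder ι]

/-- Koszul chains in homological degree `i` for the subfamily indexed by `A`:
functions from `i`-element subsets of `A` to `M`. -/
abbrev KChain (ι : Type*) (A : Finset ι) (M : Type*) (i : ℕ) :=
  {s : Finset ι // s ⊆ A ∧ s.card = i} → M

variable {M : Type*} [AddCommGroup M] [Module R M]

/-- The Koszul differential from degree `i+1` to degree `i`. -/
noncomputable def kd (y : ι → R) (A : Finset ι) (i : ℕ) :
    KChain ι A M (i + 1) →ₗ[R] KChain ι A M i where
  toFun f t := ∑ j ∈ (A \ t.1).attach,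
    ((-1 : ℤ) ^ ((t.1.filter (· < j.1)).card)) •
      y j.1 • f ⟨insert j.1 t.1, by
        obtain ⟨hjA, hjt⟩ := Finset.mem_sdiff.mp j.2
        exact ⟨Finset.insert_subset hjA t.2.1, by
          rw [Finset.card_insert_of_notMem hjt, t.2.2]⟩⟩
  map_add' f g := by
    funext t
    simp [smul_add, Finset.sum_add_distrib]
  map_smul' r f := by
    funext t
    simp only [Pi.smul_apply, RingHom.id_apply]
    rw [Finset.smul_sum]
    refine Finset.sum_congr rfl fun j _ => ?_
    rw [smul_comm r, smul_comm r]

/-- Boundaries in homological degree `i`. -/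
noncomputable def kBnd (y : ι → R) (A : Finset ι) (M : Type*) [AddCommGroup M] [Module R M]
    (i : ℕ) : Submodule R (KChain ι A M i) :=
  LinearMap.range (kd y A i)

/-- Cycles in homological degree `i`. -/
noncomputable def kCyc (y : ι → R) (A : Finset ι) (M : Type*) [AddCommGroup M] [Module R M] :
    (i : ℕ) → Submodule R (KChain ι A M i)
  | 0 => ⊤
  | (i + 1) => LinearMap.ker (kd y A i)

/-- The `i`-th Koszul homology `H_i(y_A; M)` of `M` with respect to the subfamily
of `y` indexed by `A`. -/
abbrev KoszulH (y : ι → R) (A : Finset ι) (M : Type*) [AddCommGroup M] [Module R M] (i : ℕ) :=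
  ↥(kCyc y A M i) ⧸ (kBnd y A M i).comap (kCyc y A M i).subtype

/-- The `j`-component of the canonical connecting map on cycles: the coefficient `z₁`
in the decomposition `z = z₀ + z₁ ∧ e j`. -/
noncomputable def delPart {ι : Type*} [LinearOrder ι] [DecidableEq ι] {N : Type*} [AddCommGroup N]
    {i : ℕ} (A : Finset ι) (j : ι) (hj : j ∈ A)
    (z : KChain ι A N (i + 1)) : KChain ι (A.erase j) N i :=
  fun t => ((-1 : ℤ) ^ ((t.1.filter (j < ·)).card)) •
    z ⟨insert j t.1, ⟨Finset.insert_subset hj (t.2.1.trans (Finset.erase_subset _ _)),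
      by
        rw [Finset.card_insert_of_notMem (fun h => (Finset.mem_erase.mp (t.2.1 h)).1 rfl),
          t.2.2]⟩⟩

end Koszul

section Helpers
set_option linter.unusedSectionVars false

variable {R : Type*} [CommRing R] {ι : Type*} [LinearOrder ι]

lemma deq_eq {ι : Type*} (i1 i2 : DecidableEq ι) : i1 = i2 := by
  funext a b
  exact Subsingleton.elim _ _

variable [instD : DecidableEq ι]
variable {M : Type*} [AddCommGroup M] [Module R M]

/-- Extension of a Koszul chain by zero to all finsets. -/
noncomputable def ext0 (A : Finset ι) (n : ℕ) (f : KChain ι A M n) : Finset ι → M :=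
  fun s => if h : s ⊆ A ∧ s.card = n then f ⟨s, h⟩ else 0

lemma ext0_pos {A : Finset ι} {n : ℕ} (f : KChain ι A M n) {s : Finset ι}
    (h : s ⊆ A ∧ s.card = n) : ext0 A n f s = f ⟨s, h⟩ := dif_pos h

lemma kd_apply (y : ι → R) (A : Finset ι) (n : ℕ) (f : KChain ι A M (n+1))
    (t : {s : Finset ι // s ⊆ A ∧ s.card = n}) :
    kd y A n f t = ∑ k ∈ A \ t.1,
      ((-1 : ℤ) ^ ((t.1.filter (· < k)).card)) • y k • ext0 A (n+1) f (insert k t.1) := by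
  obtain rfl : instD = fun a b => LinearOrder.toDecidableEq a b := deq_eq _ _
  rw [← Finset.sum_attach (A \ t.1) (fun k =>
    ((-1 : ℤ) ^ ((t.1.filter (· < k)).card)) • y k • ext0 A (n+1) f (insert k t.1))]
  simp only [kd, LinearMap.coe_mk, AddHom.coe_mk]
  refine Finset.sum_congr rfl fun x hx => ?_
  congr 1
  congr 1
  exact (ext0_pos f _).symm

lemma delPart_apply (A : Finset ι) (j : ι) (hj : j ∈ A) {n : ℕ} (z : KChain ι A M (n+1))
    (t : {s : Finset ι // s ⊆ A.erase j ∧ s.card = n}) :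
    delPart (i := n) A j hj z t =
      ((-1 : ℤ) ^ ((t.1.filter (j < ·)).card)) • ext0 A (n+1) z (insert j t.1) := by
  simp only [delPart]
  congr 1
  exact (ext0_pos z _).symm


lemma filt_lt_insert {t : Finset ι} {j x : ι} (hjt : j ∉ t) :
    ((insert j t).filter (· < x)).card =
      (t.filter (· < x)).card + (if j < x then 1 else 0) := by
  rw [Finset.filter_insert]
  split_ifs with h
  · rw [Finset.card_insert_of_notMem (fun hc => hjt (Finset.mem_filter.mp hc).1)]
  · rfl

lemma filt_gt_insert {t : Finset ι} {j x : ι} (hxt : x ∉ t) :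
    ((insert x t).filter (j < ·)).card =
      (t.filter (j < ·)).card + (if j < x then 1 else 0) := by
  rw [Finset.filter_insert]
  split_ifs with h
  · rw [Finset.card_insert_of_notMem (fun hc => hxt (Finset.mem_filter.mp hc).1)]
  · rfl

/-- The connecting map commutes with the Koszul differential. -/
lemma delPart_kd (y : ι → R) (A : Finset ι) (j : ι) (hj : j ∈ A) (n : ℕ)
    (u : KChain ι A M (n+2)) :
    delPart (i := n) A j hj (kd y A (n+1) u) =
      kd y (A.erase j) n (delPart (i := n+1) A j hj u) := by
  funext t
  obtain ⟨t, htA, htc⟩ := t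
  have hjt : j ∉ t := fun h => (Finset.mem_erase.mp (htA h)).1 rfl
  have h1 : insert j t ⊆ A ∧ (insert j t).card = n + 1 :=
    ⟨Finset.insert_subset hj (htA.trans (Finset.erase_subset _ _)),
      by rw [Finset.card_insert_of_notMem hjt, htc]⟩
  rw [delPart_apply, ext0_pos (kd y A (n+1) u) h1, kd_apply, kd_apply, Finset.smul_sum]
  have hset : A \ insert j t = (A.erase j) \ t := by
    ext a
    simp only [Finset.mem_sdiff, Finset.mem_insert, Finset.mem_erase, not_or]
    tauto
  rw [hset]
  refine Finset.sum_congr rfl fun x hx => ?_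
  obtain ⟨hx1, hx2⟩ := Finset.mem_sdiff.mp hx
  have hxA : x ∈ A := (Finset.mem_erase.mp hx1).2
  have hxj : x ≠ j := (Finset.mem_erase.mp hx1).1
  have h2 : insert x t ⊆ A.erase j ∧ (insert x t).card = n + 1 :=
    ⟨Finset.insert_subset hx1 htA, by rw [Finset.card_insert_of_notMem hx2, htc]⟩
  rw [ext0_pos (delPart (i := n+1) A j hj u) h2, delPart_apply, Finset.insert_comm x j t,
    smul_comm (y x) ((-1:ℤ) ^ (((insert x t).filter (j < ·)).card)),
    smul_smul, smul_smul, ← pow_add, ← pow_add,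
    filt_lt_insert hjt, filt_gt_insert hx2]
  ring_nf

lemma cancel_pow_succ (e : ℕ) (w : M) :
    ((-1:ℤ)^(e+1)) • w + ((-1:ℤ)^e) • w = 0 := by
  rw [pow_succ, mul_smul, neg_one_smul ℤ w, smul_neg, neg_add_cancel]

/-- The Koszul differential squares to zero. -/
lemma kd_kd (y : ι → R) (A : Finset ι) (n : ℕ) (u : KChain ι A M (n+2)) :
    kd y A n (kd y A (n+1) u) = 0 := by
  funext t
  obtain ⟨t, htA, htc⟩ := t
  rw [kd_apply]
  set S := A \ t with hS
  have key : ∀ x ∈ S,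
      ((-1 : ℤ) ^ ((t.filter (· < x)).card)) • y x •
        ext0 A (n+1) (kd y A (n+1) u) (insert x t) =
      ∑ k ∈ S.erase x, ((-1:ℤ) ^ ((t.filter (· < x)).card + (t.filter (· < k)).card
          + (if x < k then 1 else 0))) •
        ((y x * y k) • ext0 A (n+2) u (insert k (insert x t))) := by
    intro x hx
    obtain ⟨hxA, hxt⟩ := Finset.mem_sdiff.mp hx
    have h1 : insert x t ⊆ A ∧ (insert x t).card = n + 1 :=
      ⟨Finset.insert_subset hxA htA, by rw [Finset.card_insert_of_notMem hxt, htc]⟩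
    rw [ext0_pos (kd y A (n+1) u) h1, kd_apply]
    have hset : A \ insert x t = S.erase x := by
      ext a
      simp only [hS, Finset.mem_sdiff, Finset.mem_insert, Finset.mem_erase, not_or]
      tauto
    rw [hset, Finset.smul_sum, Finset.smul_sum]
    refine Finset.sum_congr rfl fun k hk => ?_
    have hkx : k ≠ x := (Finset.mem_erase.mp hk).1
    show _ • y x • _ • y k • _ = _
    rw [filt_lt_insert hxt, smul_comm (y x) ((-1:ℤ) ^ _), smul_smul, smul_smul,
      ← pow_add, ← add_assoc]
  rw [Finset.sum_congr rfl key]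
  -- now a double sum; reindex over the product and cancel via the swap involution
  have herase : ∀ x : ι, S.erase x = S.filter (· ≠ x) := fun x => (Finset.filter_ne' S x).symm
  have step : ∀ x ∈ S, (∑ k ∈ S.erase x, ((-1:ℤ) ^ ((t.filter (· < x)).card
        + (t.filter (· < k)).card + (if x < k then 1 else 0))) •
        ((y x * y k) • ext0 A (n+2) u (insert k (insert x t)))) =
      ∑ k ∈ S, if k ≠ x then ((-1:ℤ) ^ ((t.filter (· < x)).card
        + (t.filter (· < k)).card + (if x < k then 1 else 0))) •
        ((y x * y k) • ext0 A (n+2) u (insert k (insert x t))) else 0 := by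
    intro x _
    rw [herase x, Finset.sum_filter]
  rw [Finset.sum_congr rfl step, ← Finset.sum_product']
  refine Finset.sum_involution (fun p _ => Prod.swap p) ?_ ?_ ?_ ?_
  · rintro ⟨x, k⟩ hp
    simp only [Prod.swap]
    by_cases h : k = x
    · subst h
      simp
    · rw [if_pos h, if_pos (Ne.symm h)]
      rcases lt_or_gt_of_ne h with hlt | hlt
      · -- k < x
        rw [if_neg (not_lt.mpr hlt.le), if_pos hlt, Nat.add_zero, mul_comm (y x) (y k),
          Finset.insert_comm k x t, add_comm ((t.filter (· < x)).card),
          add_comm ((-1:ℤ) ^ ((t.filter (· < k)).card + (t.filter (· < x)).card) •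
            ((y k * y x) • ext0 A (n+2) u (insert x (insert k t))))]
        exact cancel_pow_succ _ _
      · -- x < k
        rw [if_pos hlt, if_neg (not_lt.mpr hlt.le), Nat.add_zero, mul_comm (y k) (y x),
          Finset.insert_comm x k t, add_comm ((t.filter (· < k)).card)]
        exact cancel_pow_succ _ _
  · rintro ⟨x, k⟩ hp hne
    intro hc
    apply hne
    have hkx : k = x := (Prod.ext_iff.mp hc).1
    simp [hkx]
  · rintro ⟨x, k⟩ hp
    simp only [Prod.swap]
    rw [Finset.mem_product] at hp ⊢
    exact ⟨hp.2, hp.1⟩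
  · rintro ⟨x, k⟩ hp
    rfl

/-- Proof that `insert j t` is a legitimate index for chains on `A`. -/
lemma insert_cond {A : Finset ι} {j : ι} (hj : j ∈ A) {n : ℕ}
    (t : {s : Finset ι // s ⊆ A.erase j ∧ s.card = n}) :
    insert j t.1 ⊆ A ∧ (insert j t.1).card = n + 1 :=
  ⟨Finset.insert_subset hj (t.2.1.trans (Finset.erase_subset _ _)),
    by rw [Finset.card_insert_of_notMem (fun h => (Finset.mem_erase.mp (t.2.1 h)).1 rfl), t.2.2]⟩

/-- Restriction of a chain on `A` to a chain on `A.erase j`. -/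
noncomputable def resC (j : ι) {A : Finset ι} {n : ℕ} (f : KChain ι A M n) :
    KChain ι (A.erase j) M n :=
  fun t => f ⟨t.1, t.2.1.trans (Finset.erase_subset _ _), t.2.2⟩

/-- Extension of a chain on `A.erase j` by zero to a chain on `A`. -/
noncomputable def zextC (j : ι) {A : Finset ι} {n : ℕ} (f : KChain ι (A.erase j) M n) :
    KChain ι A M n :=
  fun s => if h : j ∈ s.1 then 0 else f ⟨s.1, Finset.subset_erase.mpr ⟨s.2.1, h⟩, s.2.2⟩

/-- "Wedging with `e j`": extension of a chain on `A.erase j` to a chain on `A` of one higher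
degree, supported on sets containing `j`. -/
noncomputable def extC (j : ι) {A : Finset ι} {n : ℕ} (f : KChain ι (A.erase j) M n) :
    KChain ι A M (n+1) :=
  fun s => if h : j ∈ s.1 then
    f ⟨s.1.erase j, Finset.erase_subset_erase j s.2.1,
      by rw [Finset.card_erase_of_mem h, s.2.2]; omega⟩ else 0

lemma resC_zextC (j : ι) {A : Finset ι} {n : ℕ} (f : KChain ι (A.erase j) M n) :
    resC j (zextC j f) = f := by
  funext t
  have hjt : j ∉ t.1 := fun h => (Finset.mem_erase.mp (t.2.1 h)).1 rfl
  simp only [resC, zextC, dif_neg hjt]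

lemma resC_extC (j : ι) {A : Finset ι} {n : ℕ} (f : KChain ι (A.erase j) M n) :
    resC j (extC j f) = 0 := by
  funext t
  have hjt : j ∉ t.1 := fun h => (Finset.mem_erase.mp (t.2.1 h)).1 rfl
  simp only [resC, extC, dif_neg hjt]
  rfl

lemma delPart_zextC {A : Finset ι} {j : ι} (hj : j ∈ A) {n : ℕ}
    (f : KChain ι (A.erase j) M (n+1)) :
    delPart (i := n) A j hj (zextC j f) = 0 := by
  funext t
  simp only [delPart, zextC, dif_pos (Finset.mem_insert_self j t.1), smul_zero]
  rfl

lemma delPart_extC {A : Finset ι} {j : ι} (hj : j ∈ A) (hmax : ∀ a ∈ A, a ≤ j) {n : ℕ}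
    (f : KChain ι (A.erase j) M n) :
    delPart (i := n) A j hj (extC j f) = f := by
  funext t
  have hjt : j ∉ t.1 := fun h => (Finset.mem_erase.mp (t.2.1 h)).1 rfl
  have hfilt : t.1.filter (j < ·) = ∅ :=
    Finset.filter_eq_empty_iff.mpr
      (fun a ha => not_lt.mpr (hmax a (Finset.mem_of_mem_erase (t.2.1 ha))))
  simp only [delPart, extC, dif_pos (Finset.mem_insert_self j t.1), hfilt,
    Finset.card_empty, pow_zero, one_smul]
  exact congrArg f (Subtype.ext (by simp [Finset.erase_insert hjt]))

lemma delPart_sub {A : Finset ι} {j : ι} (hj : j ∈ A) {n : ℕ}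
    (f g : KChain ι A M (n+1)) :
    delPart (i := n) A j hj (f - g) = delPart (i := n) A j hj f - delPart (i := n) A j hj g := by
  funext t
  simp only [delPart, Pi.sub_apply, smul_sub]

lemma neg_one_pow_smul_self (c : ℕ) (w : M) : ((-1:ℤ)^c) • ((-1:ℤ)^c) • w = w := by
  rw [smul_smul, ← pow_add, ← two_mul, pow_mul]
  norm_num

/-- If the `j`-component of `g` vanishes, then `g` vanishes on all sets containing `j`. -/
lemma eq_zero_of_delPart_eq_zero {A : Finset ι} {j : ι} (hj : j ∈ A) {n : ℕ}
    {g : KChain ι A M (n+1)} (hg : delPart (i := n) A j hj g = 0)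
    (s : {s : Finset ι // s ⊆ A ∧ s.card = n + 1}) (hjs : j ∈ s.1) : g s = 0 := by
  have h2 : s.1.erase j ⊆ A.erase j ∧ (s.1.erase j).card = n :=
    ⟨Finset.erase_subset_erase _ s.2.1, by rw [Finset.card_erase_of_mem hjs, s.2.2]; omega⟩
  have key := congrFun hg ⟨s.1.erase j, h2⟩
  rw [delPart_apply, ext0_pos g (insert_cond hj ⟨s.1.erase j, h2⟩)] at key
  have he : (⟨insert j (s.1.erase j), insert_cond hj ⟨s.1.erase j, h2⟩⟩ :
      {u : Finset ι // u ⊆ A ∧ u.card = n + 1}) = s := Subtype.ext (Finset.insert_erase hjs)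
  rw [he] at key
  simp only [Pi.zero_apply] at key
  have key2 := congrArg (fun w : M => ((-1:ℤ)^(((s.1.erase j).filter (j < ·)).card)) • w) key
  simp only [smul_zero] at key2
  rw [neg_one_pow_smul_self] at key2
  exact key2

/-- `delPart` of a chain vanishing on `j`-sets also vanishes on `j`-sets. -/
lemma delPart_vanish {A : Finset ι} {k : ι} (hk : k ∈ A) {n : ℕ}
    {g : KChain ι A M (n+1)} {j : ι}
    (h : ∀ s (_ : j ∈ s.1), g s = 0)
    (s : {s : Finset ι // s ⊆ A.erase k ∧ s.card = n}) (hjs : j ∈ s.1) :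
    delPart (i := n) A k hk g s = 0 := by
  rw [delPart_apply, ext0_pos g (insert_cond hk s), h _ (Finset.mem_insert_of_mem hjs), smul_zero]

lemma delPart_eq_zero_of_forall {A : Finset ι} {j : ι} (hj : j ∈ A) {n : ℕ}
    {g : KChain ι A M (n+1)} (h : ∀ s (_ : j ∈ s.1), g s = 0) :
    delPart (i := n) A j hj g = 0 := by
  funext t
  rw [delPart_apply, ext0_pos g (insert_cond hj t), h _ (Finset.mem_insert_self j t.1), smul_zero]
  rfl

lemma ext0_resC {A : Finset ι} {j : ι} {n : ℕ} (f : KChain ι A M n) {s : Finset ι}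
    (h : s ⊆ A.erase j ∧ s.card = n) :
    ext0 (A.erase j) n (resC j f) s = ext0 A n f s := by
  rw [ext0_pos _ h, ext0_pos f ⟨h.1.trans (Finset.erase_subset _ _), h.2⟩]
  rfl

/-- Splitting the Koszul differential along the maximal element `j` of `A`. -/
lemma kd_apply_max (y : ι → R) (A : Finset ι) (j : ι) (hj : j ∈ A)
    (hmax : ∀ a ∈ A, a ≤ j) (n : ℕ) (f : KChain ι A M (n+1))
    (t : {s : Finset ι // s ⊆ A.erase j ∧ s.card = n}) :
    kd y A n f ⟨t.1, t.2.1.trans (Finset.erase_subset _ _), t.2.2⟩ =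
      kd y (A.erase j) n (resC j f) t +
        ((-1:ℤ)^n) • (y j • delPart (i := n) A j hj f t) := by
  have hjt : j ∉ t.1 := fun h => (Finset.mem_erase.mp (t.2.1 h)).1 rfl
  rw [kd_apply, kd_apply, delPart_apply]
  have hsplit : A \ t.1 = insert j ((A.erase j) \ t.1) := by
    ext a
    by_cases haj : a = j
    · subst haj
      simp [hj, hjt]
    · simp only [Finset.mem_sdiff, Finset.mem_insert, Finset.mem_erase, haj, false_or]
      tauto
  have hjnot : j ∉ (A.erase j) \ t.1 := fun hc =>
    (Finset.mem_erase.mp (Finset.mem_sdiff.mp hc).1).1 rfl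
  rw [hsplit, Finset.sum_insert hjnot]
  have hfilt1 : t.1.filter (· < j) = t.1 :=
    Finset.filter_eq_self.mpr (fun a ha =>
      lt_of_le_of_ne (hmax a (Finset.mem_of_mem_erase (t.2.1 ha)))
        (Finset.mem_erase.mp (t.2.1 ha)).1)
  have hfilt2 : t.1.filter (j < ·) = ∅ :=
    Finset.filter_eq_empty_iff.mpr
      (fun a ha => not_lt.mpr (hmax a (Finset.mem_of_mem_erase (t.2.1 ha))))
  rw [hfilt1, hfilt2, Finset.card_empty, pow_zero, one_smul, add_comm]
  congr 1
  · refine Finset.sum_congr rfl fun x hx => ?_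
    obtain ⟨hx1, hx2⟩ := Finset.mem_sdiff.mp hx
    have h2 : insert x t.1 ⊆ A.erase j ∧ (insert x t.1).card = n + 1 :=
      ⟨Finset.insert_subset hx1 t.2.1, by rw [Finset.card_insert_of_notMem hx2, t.2.2]⟩
    rw [ext0_resC f h2]
  · exact congrArg₂ (fun (a : ℤ) (v : M) => a • v) (by rw [t.2.2]) rfl

/-- Transport of chains along an equality of index sets. -/
noncomputable def KCast {C C' : Finset ι} (h : C = C') {n : ℕ} (f : KChain ι C M n) :
    KChain ι C' M n :=
  fun s => f ⟨s.1, by rw [h]; exact s.2.1, s.2.2⟩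

lemma KCast_bnd (y : ι → R) {C C' : Finset ι} (h : C = C') {n : ℕ} {g : KChain ι C M n}
    (hg : g ∈ LinearMap.range (kd y C n)) :
    KCast h g ∈ LinearMap.range (kd y C' n) := by
  subst h
  exact hg

end Helpers

/-- **Lemma (injectivity of the connecting map on Koszul homology).**
Let `R` be a commutative ring, `M` an `R`-module and `y 1, …, y r ∈ R`.  Fix `i > 0` and
suppose that for every subset `A ⊆ {1,…,r}` and every `s` with `max A < s ≤ r` one has
`y s • H_i(y_A; M) = 0`.  Then for every `A ⊆ {1,…,r}` the canonical map
`∂ : H_{i+1}(y_A; M) → ⊕_{j ∈ A} H_i(y_{A∖{j}}; M)` is injective; equivalently (and this is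
how we phrase it), whenever a cycle `z` for `y_A` in degree `i+1` has all of its components
`∂_j z` equal to boundaries, `z` is itself a boundary. -/
theorem koszul_connecting_map_injective
    {R : Type*} [CommRing R] {M : Type*} [AddCommGroup M] [Module R M]
    (r : ℕ) (y : Fin r → R) (i : ℕ) (hi : 0 < i)
    (hann : ∀ A : Finset (Fin r), ∀ s : Fin r, (∀ a ∈ A, a < s) →
      ∀ h : KoszulH y A M i, y s • h = 0)
    (A : Finset (Fin r)) (z : KChain (Fin r) A M (i + 1))
    (hz : z ∈ kCyc y A M (i + 1))
    (hbd : ∀ j : Fin r, ∀ hj : j ∈ A, delPart (i := i) (N := M) A j hj z ∈ kBnd y (A.erase j) M i) :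
    z ∈ kBnd y A M (i + 1) := by
  obtain ⟨m, rfl⟩ : ∃ m, i = m + 1 := ⟨i - 1, by omega⟩
  clear hi
  suffices H : ∀ N (A : Finset (Fin r)) (_ : A.card ≤ N)
      (z : KChain (Fin r) A M (m + 1 + 1)) (_ : z ∈ kCyc y A M (m + 1 + 1))
      (_ : ∀ j (hj : j ∈ A), delPart (i := m + 1) A j hj z ∈ kBnd y (A.erase j) M (m + 1)),
      z ∈ kBnd y A M (m + 1 + 1) from H A.card A le_rfl z hz hbd
  intro N
  induction N with
  | zero =>
    intro A hA z _ _
    have hAe : A = ∅ := Finset.card_eq_zero.mp (Nat.le_zero.mp hA)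
    subst hAe
    exact ⟨0, by funext t; exact absurd t.2.2 (by simp [Finset.subset_empty.mp t.2.1])⟩
  | succ N IH =>
    intro A hA z hzc hbd
    rcases A.eq_empty_or_nonempty with rfl | hne
    · exact ⟨0, by funext t; exact absurd t.2.2 (by simp [Finset.subset_empty.mp t.2.1])⟩
    set j := A.max' hne with hjdef
    have hjA : j ∈ A := A.max'_mem hne
    have hmax : ∀ a ∈ A, a ≤ j := fun a ha => A.le_max' a ha
    have hcyc : kd y A (m+1) z = 0 := hzc
    obtain ⟨w, hw⟩ := hbd j hjA
    set z'' : KChain (Fin r) A M (m+1+1) := z - kd y A (m+2) (extC j w) with hz''def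
    have hcyc'' : kd y A (m+1) z'' = 0 := by
      rw [hz''def, map_sub, hcyc, kd_kd, sub_zero]
    have hdel'' : delPart (i := m+1) A j hjA z'' = 0 := by
      rw [hz''def, delPart_sub, delPart_kd y A j hjA (m+1) (extC j w),
        delPart_extC hjA hmax w, hw, sub_self]
    have hvan : ∀ s (_ : j ∈ s.1), z'' s = 0 := eq_zero_of_delPart_eq_zero hjA hdel''
    have hrescyc : kd y (A.erase j) (m+1) (resC j z'') = 0 := by
      funext t
      have h1 := kd_apply_max y A j hjA hmax (m+1) z'' t
      rw [hcyc'', hdel''] at h1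
      simp only [Pi.zero_apply, smul_zero, add_zero] at h1
      simpa using h1.symm
    have hbd' : ∀ k (hk' : k ∈ A.erase j),
        delPart (i := m+1) (A.erase j) k hk' (resC j z'') ∈
          kBnd y ((A.erase j).erase k) M (m+1) := by
      intro k hk'
      have hkA : k ∈ A := Finset.mem_of_mem_erase hk'
      have hkj : k ≠ j := (Finset.mem_erase.mp hk').1
      obtain ⟨uk, huk⟩ := hbd k hkA
      set u' := uk - delPart (i := m+2) A k hkA (extC j w) with hu'def
      have hu' : kd y (A.erase k) (m+1) u' = delPart (i := m+1) A k hkA z'' := by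
        rw [hu'def, map_sub, huk, hz''def, delPart_sub,
          delPart_kd y A k hkA (m+1) (extC j w)]
      have hjk : j ∈ A.erase k := Finset.mem_erase.mpr ⟨Ne.symm hkj, hjA⟩
      have hmaxk : ∀ a ∈ A.erase k, a ≤ j := fun a ha => hmax a (Finset.mem_of_mem_erase ha)
      have hvanw : ∀ s (_ : j ∈ s.1), (kd y (A.erase k) (m+1) u') s = 0 := by
        intro s hjs
        rw [hu']
        exact delPart_vanish hkA hvan s hjs
      have hccyc : kd y ((A.erase k).erase j) m
          (delPart (i := m+1) (A.erase k) j hjk u') = 0 := by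
        rw [← delPart_kd y (A.erase k) j hjk m u']
        exact delPart_eq_zero_of_forall hjk hvanw
      have hcmem : delPart (i := m+1) (A.erase k) j hjk u' ∈
          kCyc y ((A.erase k).erase j) M (m+1) := LinearMap.mem_ker.mpr hccyc
      have hlt : ∀ a ∈ (A.erase k).erase j, a < j := fun a ha =>
        lt_of_le_of_ne
          (hmax a (Finset.mem_of_mem_erase (Finset.mem_of_mem_erase ha)))
          (Finset.mem_erase.mp ha).1
      have hq := hann ((A.erase k).erase j) j hlt
        (Submodule.Quotient.mk ⟨delPart (i := m+1) (A.erase k) j hjk u', hcmem⟩)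
      rw [← Submodule.Quotient.mk_smul] at hq
      have hq2 := (Submodule.Quotient.mk_eq_zero _).mp hq
      have hq3 : y j • delPart (i := m+1) (A.erase k) j hjk u' ∈
          kBnd y ((A.erase k).erase j) M (m+1) := hq2
      obtain ⟨v1, hv1⟩ := hq3
      have hXmem : resC j (kd y (A.erase k) (m+1) u') ∈
          LinearMap.range (kd y ((A.erase k).erase j) (m+1)) := by
        refine ⟨resC j u' + ((-1:ℤ)^(m+1)) • v1, ?_⟩
        rw [map_add, map_zsmul, hv1]
        funext t
        have h1 := kd_apply_max y (A.erase k) j hjk hmaxk (m+1) u' t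
        show _ = (kd y (A.erase k) (m+1) u') ⟨t.1, t.2.1.trans (Finset.erase_subset _ _), t.2.2⟩
        rw [h1]
        simp only [Pi.add_apply, Pi.smul_apply]
      have hE : (A.erase k).erase j = (A.erase j).erase k := Finset.erase_right_comm
      have hknotj : k ∈ A.erase j := Finset.mem_erase.mpr ⟨hkj, hkA⟩
      have hXeq : delPart (i := m+1) (A.erase j) k hk' (resC j z'') =
          KCast hE (resC j (kd y (A.erase k) (m+1) u')) := by
        funext t
        have hkt : k ∉ t.1 := fun h => (Finset.mem_erase.mp (t.2.1 h)).1 rfl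
        have hc1 : insert k t.1 ⊆ A.erase j ∧ (insert k t.1).card = m + 2 :=
          ⟨Finset.insert_subset hknotj (t.2.1.trans (Finset.erase_subset _ _)),
            by rw [Finset.card_insert_of_notMem hkt, t.2.2]⟩
        rw [delPart_apply, ext0_resC z'' hc1]
        simp only [KCast, resC]
        rw [hu', delPart_apply]
      rw [hXeq]
      exact KCast_bnd y hE hXmem
    have hcard : (A.erase j).card ≤ N := by
      rw [Finset.card_erase_of_mem hjA]
      have := Finset.card_pos.mpr hne
      omega
    obtain ⟨v, hv⟩ := IH (A.erase j) hcard (resC j z'') (LinearMap.mem_ker.mpr hrescyc) hbd'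
    have hfin : kd y A (m+2) (zextC j v) = z'' := by
      funext s
      by_cases hjs : j ∈ s.1
      · rw [hvan s hjs]
        refine eq_zero_of_delPart_eq_zero hjA ?_ s hjs
        rw [delPart_kd y A j hjA (m+1) (zextC j v), delPart_zextC hjA v, map_zero]
      · have ht : s.1 ⊆ A.erase j := Finset.subset_erase.mpr ⟨s.2.1, hjs⟩
        have h1 := kd_apply_max y A j hjA hmax (m+2) (zextC j v)
          ⟨s.1, ht, s.2.2⟩
        rw [resC_zextC, delPart_zextC hjA v] at h1
        simp only [Pi.zero_apply, smul_zero, add_zero] at h1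
        rw [hv] at h1
        exact h1
    refine ⟨zextC j v + extC j w, ?_⟩
    rw [map_add, hfin, hz''def]
    exact sub_add_cancel z (kd y A (m+2) (extC j w))
end

section
/- Let R be a commutative ring, M an R-module, y_1,...,y_r ∈ R, and I an ideal of R containing (y_1,...,y_r). Fix i > 0. If I · H_i(y_A; M) = 0 for all subsets A ⊆ {1,...,r}, then I · H_{i+1}(y_A; M) = 0 for all subsets A ⊆ {1,...,r}. -/
open Finset

section Aux

variable {R : Type*} [CommRing R] {ι : Type*} [LinearOrder ι]
variable {M : Type*} [AddCommGroup M] [Module R M]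

namespace KoszulAux

lemma not_mem_of_subset_erase {A t : Finset ι} {j : ι} (h : t ⊆ A.erase j) : j ∉ t :=
  fun hj => (Finset.mem_erase.mp (h hj)).1 rfl

lemma neg_one_pow_add_self (a : ℕ) : (-1 : ℤ) ^ (a + a) = 1 := by
  rw [← two_mul, pow_mul]; norm_num

lemma neg_one_pow_add_two (k : ℕ) : (-1 : ℤ) ^ (k + 2) = (-1 : ℤ) ^ k := by
  rw [pow_succ, pow_succ]; ring

lemma zsmul_pow_succ_cancel (k : ℕ) (v : M) :
    (-1 : ℤ) ^ k • v + (-1 : ℤ) ^ (k + 1) • v = 0 := by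
  rw [pow_succ, mul_smul, neg_one_zsmul, smul_neg, add_neg_cancel]

lemma filter_lt_card_add_filter_gt_card {t : Finset ι} {j : ι} (hj : j ∉ t) :
    (t.filter (· < j)).card + (t.filter (j < ·)).card = t.card := by
  have h := Finset.card_filter_add_card_filter_not (s := t) (p := (· < j))
  rw [← h]
  congr 2
  apply Finset.filter_congr
  intro x hx
  simp only [not_lt]
  constructor
  · intro h2
    exact le_of_lt h2
  · intro h2
    exact lt_of_le_of_ne h2 (fun he => hj (he ▸ hx))

lemma filter_insert_card {t : Finset ι} {a : ι} (ha : a ∉ t) (p : ι → Prop) [DecidablePred p] :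
    ((insert a t).filter p).card = (t.filter p).card + if p a then 1 else 0 := by
  rw [Finset.filter_insert]
  split
  · rw [Finset.card_insert_of_notMem (fun hc => ha (Finset.mem_of_mem_filter _ hc))]
  · rfl

/-- Restriction of a chain to a smaller index set. -/
def resKC {A B : Finset ι} (h : B ⊆ A) {n : ℕ} (f : KChain ι A M n) : KChain ι B M n :=
  fun t => f ⟨t.1, t.2.1.trans h, t.2.2⟩

/-- Transport of a chain along an equality of index sets. -/
def castKC {E E' : Finset ι} (h : E = E') {n : ℕ} (f : KChain ι E M n) : KChain ι E' M n :=
  fun t => f ⟨t.1, h ▸ t.2⟩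

/-- Extension by zero of a chain on `A.erase j` to a chain on `A`. -/
def extKC {A : Finset ι} (j : ι) {n : ℕ} (f : KChain ι (A.erase j) M n) : KChain ι A M n :=
  fun t => if h : t.1 ⊆ A.erase j then f ⟨t.1, h, t.2.2⟩ else 0

/-- Wedging with `e j`. -/
def wedgeKC {A : Finset ι} (j : ι) {n : ℕ} (g : KChain ι (A.erase j) M n) :
    KChain ι A M (n + 1) :=
  fun s => if h : j ∈ s.1 then
    ((-1 : ℤ) ^ (((s.1.erase j)).filter (j < ·)).card) • g ⟨s.1.erase j,
      Finset.erase_subset_erase j s.2.1, by rw [Finset.card_erase_of_mem h, s.2.2]; rfl⟩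
  else 0

noncomputable def kdT (y : ι → R) (A : Finset ι) (n : ℕ) (f : KChain ι A M (n + 1))
    (t : {s : Finset ι // s ⊆ A ∧ s.card = n}) (l : ι) : M :=
  if h : l ∈ A \ t.1 then
    ((-1 : ℤ) ^ ((t.1.filter (· < l)).card)) •
      y l • f ⟨insert l t.1, Finset.insert_subset (Finset.mem_sdiff.mp h).1 t.2.1,
        by rw [Finset.card_insert_of_notMem (Finset.mem_sdiff.mp h).2, t.2.2]⟩
  else 0

lemma kd_apply (y : ι → R) (A : Finset ι) (n : ℕ) (f : KChain ι A M (n + 1))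
    (t : {s : Finset ι // s ⊆ A ∧ s.card = n}) :
    kd y A n f t = ∑ l ∈ A \ t.1, kdT y A n f t l := by
  rw [← Finset.sum_attach (A \ t.1) (kdT y A n f t)]
  show ∑ j ∈ (A \ t.1).attach, _ = _
  refine Finset.sum_congr rfl fun j _ => ?_
  rw [kdT, dif_pos j.2]

lemma res_kd (y : ι → R) {A : Finset ι} {j : ι} (hj : j ∈ A) (n : ℕ)
    (f : KChain ι A M (n + 1)) :
    resKC (Finset.erase_subset j A) (kd y A n f)
      = kd y (A.erase j) n (resKC (Finset.erase_subset j A) f)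
        + ((-1 : ℤ) ^ n) • (y j • delPart A j hj f) := by
  funext t
  have hjt : j ∉ t.1 := not_mem_of_subset_erase t.2.1
  have hsplit : A \ t.1 = insert j ((A.erase j) \ t.1) := by
    ext x
    simp only [Finset.mem_sdiff, Finset.mem_insert, Finset.mem_erase]
    constructor
    · rintro ⟨hxA, hxt⟩
      rcases eq_or_ne x j with rfl | hne
      · exact Or.inl rfl
      · exact Or.inr ⟨⟨hne, hxA⟩, hxt⟩
    · rintro (rfl | ⟨⟨hne, hxA⟩, hxt⟩)
      · exact ⟨hj, hjt⟩
      · exact ⟨hxA, hxt⟩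
  have hnotmem : j ∉ (A.erase j) \ t.1 := by simp
  simp only [resKC, Pi.add_apply, Pi.smul_apply]
  rw [kd_apply, kd_apply, hsplit, Finset.sum_insert hnotmem]
  have hterm : ∀ l ∈ (A.erase j) \ t.1,
      kdT y A n f ⟨t.1, t.2.1.trans (Finset.erase_subset j A), t.2.2⟩ l
        = kdT y (A.erase j) n (resKC (Finset.erase_subset j A) f) t l := by
    intro l hl
    have hl' : l ∈ A \ t.1 := by
      rw [hsplit]; exact Finset.mem_insert_of_mem hl
    rw [kdT, kdT, dif_pos hl', dif_pos hl]
    rfl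
  rw [Finset.sum_congr rfl hterm, add_comm]
  congr 1
  -- the j-term
  have hjmem : j ∈ A \ t.1 := Finset.mem_sdiff.mpr ⟨hj, hjt⟩
  rw [kdT, dif_pos hjmem]
  simp only [delPart]
  rw [smul_comm (y j) ((-1 : ℤ) ^ ((t.1.filter (j < ·)).card)), smul_smul, ← pow_add]
  have hcard : (t.1.filter (· < j)).card + (t.1.filter (j < ·)).card = n := by
    rw [filter_lt_card_add_filter_gt_card hjt, t.2.2]
  have hexp : (-1 : ℤ) ^ ((t.1.filter (· < j)).card)
      = (-1 : ℤ) ^ (n + (t.1.filter (j < ·)).card) := by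
    have h2 : n + (t.1.filter (j < ·)).card
        = (t.1.filter (· < j)).card + ((t.1.filter (j < ·)).card + (t.1.filter (j < ·)).card) := by
      omega
    rw [h2, pow_add, neg_one_pow_add_self, mul_one]
  rw [hexp]

lemma delPart_kd (y : ι → R) {A : Finset ι} {j : ι} (hj : j ∈ A) (n : ℕ)
    (f : KChain ι A M (n + 2)) :
    delPart A j hj (kd y A (n + 1) f) = kd y (A.erase j) n (delPart A j hj f) := by
  funext t
  have hjt : j ∉ t.1 := not_mem_of_subset_erase t.2.1
  simp only [delPart]
  rw [kd_apply, kd_apply, Finset.smul_sum]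
  have hidx : A \ (insert j t.1) = (A.erase j) \ t.1 := by
    ext x
    simp only [Finset.mem_sdiff, Finset.mem_insert, Finset.mem_erase, not_or]
    tauto
  rw [hidx]
  refine Finset.sum_congr rfl fun l hl => ?_
  have hlA : l ∈ A := (Finset.mem_erase.mp (Finset.mem_sdiff.mp hl).1).2
  have hlj : l ≠ j := (Finset.mem_erase.mp (Finset.mem_sdiff.mp hl).1).1
  have hlt : l ∉ t.1 := (Finset.mem_sdiff.mp hl).2
  have hl' : l ∈ A \ (insert j t.1) := by rw [hidx]; exact hl
  rw [kdT, kdT, dif_pos hl', dif_pos hl]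
  simp only [delPart]
  rw [smul_comm (y l) ((-1 : ℤ) ^ (((insert l t.1).filter (j < ·)).card)),
    smul_smul, smul_smul, ← pow_add, ← pow_add]
  have hc1 : ((insert j t.1).filter (· < l)).card
      = (t.1.filter (· < l)).card + if j < l then 1 else 0 :=
    filter_insert_card hjt _
  have hc2 : ((insert l t.1).filter (j < ·)).card
      = (t.1.filter (j < ·)).card + if j < l then 1 else 0 :=
    filter_insert_card hlt _
  rw [hc1, hc2]
  have hexp : (t.1.filter (j < ·)).card + ((t.1.filter (· < l)).card + if j < l then 1 else 0)
      = (t.1.filter (· < l)).card + ((t.1.filter (j < ·)).card + if j < l then 1 else 0) := by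
    omega
  rw [hexp]
  congr 1
  congr 1
  exact congrArg f (Subtype.ext (Finset.insert_comm l j t.1))

lemma erase_erase_comm (A : Finset ι) (a b : ι) :
    (A.erase a).erase b = (A.erase b).erase a := by
  ext x
  simp only [Finset.mem_erase]
  tauto

lemma castKC_apply {E E' : Finset ι} (h : E = E') {n : ℕ} (f : KChain ι E M n)
    (t : {s : Finset ι // s ⊆ E' ∧ s.card = n}) :
    castKC h f t = f ⟨t.1, by rw [h]; exact t.2.1, t.2.2⟩ := by
  subst h; rfl

lemma castKC_kd (y : ι → R) {E E' : Finset ι} (h : E = E') (n : ℕ)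
    (f : KChain ι E M (n + 1)) :
    kd y E' n (castKC h f) = castKC h (kd y E n f) := by
  subst h; rfl

lemma castKC_add {E E' : Finset ι} (h : E = E') {n : ℕ} (f g : KChain ι E M n) :
    castKC h (f + g) = castKC h f + castKC h g := by
  subst h; rfl

lemma castKC_smul {E E' : Finset ι} (h : E = E') {n : ℕ} (a : R) (f : KChain ι E M n) :
    castKC h (a • f) = a • castKC h f := by
  subst h; rfl

lemma castKC_zsmul {E E' : Finset ι} (h : E = E') {n : ℕ} (z : ℤ) (f : KChain ι E M n) :
    castKC h (z • f) = z • castKC h f := by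
  subst h; rfl

lemma castKC_neg {E E' : Finset ι} (h : E = E') {n : ℕ} (f : KChain ι E M n) :
    castKC h (-f) = -castKC h f := by
  subst h; rfl

lemma resKC_congr_set {A E E' : Finset ι} (hEE : E = E') (hE : E ⊆ A) (hE' : E' ⊆ A)
    {n : ℕ} (f : KChain ι A M n) :
    resKC hE' f = castKC hEE (resKC hE f) := by
  subst hEE; rfl

lemma resKC_add {A B : Finset ι} (h : B ⊆ A) {n : ℕ} (f g : KChain ι A M n) :
    resKC h (f + g) = resKC h f + resKC h g := rfl

lemma resKC_smul {A B : Finset ι} (h : B ⊆ A) {n : ℕ} (a : R) (f : KChain ι A M n) :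
    resKC h (a • f) = a • resKC h f := rfl

lemma resKC_zsmul {A B : Finset ι} (h : B ⊆ A) {n : ℕ} (z : ℤ) (f : KChain ι A M n) :
    resKC h (z • f) = z • resKC h f := rfl

lemma resKC_zero {A B : Finset ι} (h : B ⊆ A) {n : ℕ} :
    resKC h (0 : KChain ι A M n) = 0 := rfl

lemma delPart_add {A : Finset ι} {j : ι} (hj : j ∈ A) {n : ℕ}
    (f g : KChain ι A M (n + 1)) :
    delPart A j hj (f + g) = delPart A j hj f + delPart A j hj g := by
  funext t
  simp only [delPart, Pi.add_apply, smul_add]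

lemma delPart_smul {A : Finset ι} {j : ι} (hj : j ∈ A) {n : ℕ} (a : R)
    (f : KChain ι A M (n + 1)) :
    delPart A j hj (a • f) = a • delPart A j hj f := by
  funext t
  simp only [delPart, Pi.smul_apply]
  rw [smul_comm]

lemma delPart_zsmul {A : Finset ι} {j : ι} (hj : j ∈ A) {n : ℕ} (z : ℤ)
    (f : KChain ι A M (n + 1)) :
    delPart A j hj (z • f) = z • delPart A j hj f := by
  funext t
  simp only [delPart, Pi.smul_apply]
  rw [smul_comm]

lemma delPart_zero {A : Finset ι} {j : ι} (hj : j ∈ A) {n : ℕ} :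
    delPart A j hj (0 : KChain ι A M (n + 1)) = 0 := by
  funext t
  simp only [delPart, Pi.zero_apply, smul_zero]

lemma extKC_add {A : Finset ι} (j : ι) {n : ℕ} (f g : KChain ι (A.erase j) M n) :
    extKC j (f + g) = extKC j f + extKC j g := by
  funext t
  simp only [extKC, Pi.add_apply]
  split
  · rfl
  · rw [add_zero]

lemma wedgeKC_zero {A : Finset ι} (j : ι) {n : ℕ} :
    wedgeKC j (0 : KChain ι (A.erase j) M n) = 0 := by
  funext t
  simp only [wedgeKC, Pi.zero_apply, smul_zero]
  split <;> rfl

lemma delPart_resKC {A : Finset ι} {j m : ι} (hjm : j ≠ m) (hj : j ∈ A) {n : ℕ}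
    (f : KChain ι A M (n + 1)) :
    delPart (A.erase m) j (Finset.mem_erase.mpr ⟨hjm, hj⟩) (resKC (Finset.erase_subset m A) f)
      = resKC (Finset.erase_subset_erase j (Finset.erase_subset m A)) (delPart A j hj f) := by
  funext t
  rfl

lemma delPart_delPart {A : Finset ι} {j m : ι} (hjm : j ≠ m) (hj : j ∈ A) (hm : m ∈ A)
    {n : ℕ} (z : KChain ι A M (n + 2)) :
    delPart (A.erase m) j (Finset.mem_erase.mpr ⟨hjm, hj⟩) (delPart A m hm z)
      = - castKC (erase_erase_comm A j m)
          (delPart (A.erase j) m (Finset.mem_erase.mpr ⟨fun h => hjm h.symm, hm⟩)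
            (delPart A j hj z)) := by
  funext t
  have hjt : j ∉ t.1 := fun h => (Finset.mem_erase.mp (t.2.1 h)).1 rfl
  have hmt : m ∉ t.1 := by
    intro h
    exact (Finset.mem_erase.mp (Finset.mem_erase.mp (t.2.1 h)).2).1 rfl
  simp only [delPart, Pi.neg_apply, castKC_apply]
  rw [smul_smul, smul_smul, ← pow_add, ← pow_add]
  have hc1 : ((insert j t.1).filter (m < ·)).card
      = (t.1.filter (m < ·)).card + if m < j then 1 else 0 := filter_insert_card hjt _
  have hc2 : ((insert m t.1).filter (j < ·)).card
      = (t.1.filter (j < ·)).card + if j < m then 1 else 0 := filter_insert_card hmt _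
  rw [hc1, hc2]
  have harg : (insert m (insert j t.1)) = (insert j (insert m t.1)) :=
    Finset.insert_comm m j t.1
  simp only [harg]
  rw [← neg_smul]
  congr 1
  set a := (t.1.filter (j < ·)).card with ha
  set g := (t.1.filter (m < ·)).card with hg
  rcases hjm.lt_or_gt with hlt | hlt
  · rw [if_neg (asymm hlt), if_pos hlt, add_zero,
      show g + (a + 1) = (a + g) + 1 by omega, pow_succ]
    ring
  · rw [if_pos hlt, if_neg (asymm hlt), add_zero,
      show a + (g + 1) = (g + a) + 1 by omega, pow_succ]
    ring

lemma delPart_extKC {A : Finset ι} {j : ι} (hj : j ∈ A) {n : ℕ}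
    (g : KChain ι (A.erase j) M (n + 1)) :
    delPart A j hj (extKC j g) = 0 := by
  funext t
  simp only [delPart, extKC, Pi.zero_apply]
  rw [dif_neg (fun h => (Finset.mem_erase.mp (h (Finset.mem_insert_self j t.1))).1 rfl)]
  rw [smul_zero]

lemma resKC_extKC {A : Finset ι} {j : ι} {n : ℕ} (g : KChain ι (A.erase j) M n) :
    resKC (Finset.erase_subset j A) (extKC j g) = g := by
  funext t
  simp only [resKC, extKC]
  rw [dif_pos t.2.1]

lemma delPart_wedgeKC {A : Finset ι} {j : ι} (hj : j ∈ A) {n : ℕ}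
    (g : KChain ι (A.erase j) M (n + 1)) :
    delPart A j hj (wedgeKC j g) = g := by
  funext t
  have hjt : j ∉ t.1 := not_mem_of_subset_erase t.2.1
  simp only [delPart, wedgeKC]
  rw [dif_pos (Finset.mem_insert_self j t.1)]
  simp only [Finset.erase_insert hjt]
  rw [smul_smul, ← pow_add, neg_one_pow_add_self, one_smul]

lemma resKC_wedgeKC {A : Finset ι} {j : ι} {n : ℕ} (g : KChain ι (A.erase j) M n) :
    resKC (Finset.erase_subset j A) (wedgeKC j g) = 0 := by
  funext t
  simp only [resKC, wedgeKC, Pi.zero_apply]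
  rw [dif_neg (not_mem_of_subset_erase t.2.1)]

lemma kchain_recon {A : Finset ι} {j : ι} (hj : j ∈ A) {n : ℕ} (f : KChain ι A M (n + 1)) :
    f = extKC j (resKC (Finset.erase_subset j A) f) + wedgeKC j (delPart A j hj f) := by
  funext s
  simp only [Pi.add_apply, extKC, wedgeKC, resKC, delPart]
  by_cases hjs : j ∈ s.1
  · rw [dif_neg (fun h => (Finset.mem_erase.mp (h hjs)).1 rfl), dif_pos hjs]
    simp only [Finset.insert_erase hjs]
    rw [smul_smul, ← pow_add, neg_one_pow_add_self, one_smul, zero_add]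
  · rw [dif_pos (Finset.subset_erase.mpr ⟨s.2.1, hjs⟩), dif_neg hjs, add_zero]

lemma kd_extKC (y : ι → R) {A : Finset ι} {j : ι} (hj : j ∈ A) (n : ℕ)
    (f : KChain ι (A.erase j) M (n + 2)) :
    kd y A (n + 1) (extKC j f) = extKC j (kd y (A.erase j) (n + 1) f) := by
  have h1 : delPart A j hj (kd y A (n + 1) (extKC j f)) = 0 := by
    rw [delPart_kd y hj n (extKC j f), delPart_extKC hj, map_zero]
  have h2 : resKC (Finset.erase_subset j A) (kd y A (n + 1) (extKC j f))
      = kd y (A.erase j) (n + 1) f := by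
    rw [res_kd y hj (n + 1) (extKC j f), resKC_extKC, delPart_extKC hj, smul_zero, smul_zero,
      add_zero]
  rw [kchain_recon hj (kd y A (n + 1) (extKC j f)), h1, h2, wedgeKC_zero, add_zero]

lemma kd_wedgeKC (y : ι → R) {A : Finset ι} {j : ι} (hj : j ∈ A) (n : ℕ)
    (f : KChain ι (A.erase j) M (n + 1)) :
    kd y A (n + 1) (wedgeKC j f)
      = extKC j (((-1 : ℤ) ^ (n + 1)) • (y j • f)) + wedgeKC j (kd y (A.erase j) n f) := by
  have h1 : delPart A j hj (kd y A (n + 1) (wedgeKC j f)) = kd y (A.erase j) n f := by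
    rw [delPart_kd y hj n (wedgeKC j f), delPart_wedgeKC hj]
  have h2 : resKC (Finset.erase_subset j A) (kd y A (n + 1) (wedgeKC j f))
      = ((-1 : ℤ) ^ (n + 1)) • (y j • f) := by
    rw [res_kd y hj (n + 1) (wedgeKC j f), resKC_wedgeKC, map_zero, zero_add,
      delPart_wedgeKC hj]
  rw [kchain_recon hj (kd y A (n + 1) (wedgeKC j f)), h1, h2]

lemma key (y : ι → R) (i' : ℕ)
    (hB : ∀ (E : Finset ι) (j : ι) (v : KChain ι E M (i' + 1)), kd y E i' v = 0 →
      ∃ ψ : KChain ι E M (i' + 2), kd y E (i' + 1) ψ = y j • v) :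
    ∀ (D : Finset ι) (w : KChain ι D M (i' + 2)), kd y D (i' + 1) w = 0 →
      (∀ m (hm : m ∈ D), ∃ χ : KChain ι (D.erase m) M (i' + 2),
        kd y (D.erase m) (i' + 1) χ = delPart D m hm w) →
      ∃ x : KChain ι D M (i' + 2 + 1), kd y D (i' + 2) x = w := by
  intro D
  induction D using Finset.strongInduction with
  | _ D IH =>
    intro w hw hbd
    rcases D.eq_empty_or_nonempty with rfl | ⟨m, hm⟩
    · refine ⟨0, (map_zero _).trans ?_⟩
      funext t
      exfalso
      have h1 : t.1 = ∅ := Finset.subset_empty.mp t.2.1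
      have h2 := t.2.2
      rw [h1] at h2
      simp at h2
    · obtain ⟨χ, hχ⟩ := hbd m hm
      have hresd := res_kd y hm (i' + 1) w
      rw [hw, resKC_zero] at hresd
      have hreskd : kd y (D.erase m) (i' + 1) (resKC (Finset.erase_subset m D) w)
          = -(((-1 : ℤ) ^ (i' + 1)) • (y m • delPart D m hm w)) :=
        eq_neg_of_add_eq_zero_left hresd.symm
      have hw'cyc : kd y (D.erase m) (i' + 1)
          (resKC (Finset.erase_subset m D) w + ((-1 : ℤ) ^ (i' + 1)) • (y m • χ)) = 0 := by
        rw [map_add, map_zsmul, map_smul, hχ, hreskd, neg_add_cancel]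
      have hrecon : w = extKC m (resKC (Finset.erase_subset m D) w
            + ((-1 : ℤ) ^ (i' + 1)) • (y m • χ))
          + kd y D (i' + 2) (wedgeKC m χ) := by
        rw [kd_wedgeKC y hm (i' + 1) χ, hχ, ← add_assoc, ← extKC_add]
        have hcancel : (resKC (Finset.erase_subset m D) w
              + ((-1 : ℤ) ^ (i' + 1)) • (y m • χ))
              + ((-1 : ℤ) ^ (i' + 1 + 1)) • (y m • χ)
            = resKC (Finset.erase_subset m D) w := by
          rw [add_assoc, zsmul_pow_succ_cancel, add_zero]
        rw [hcancel]
        exact kchain_recon hm w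
      have hbd' : ∀ m' (hm' : m' ∈ D.erase m),
          ∃ χ'' : KChain ι ((D.erase m).erase m') M (i' + 2),
            kd y ((D.erase m).erase m') (i' + 1) χ''
              = delPart (D.erase m) m' hm' (resKC (Finset.erase_subset m D) w
                  + ((-1 : ℤ) ^ (i' + 1)) • (y m • χ)) := by
        intro m' hm'
        have hm'D : m' ∈ D := Finset.mem_of_mem_erase hm'
        have hm'm : m' ≠ m := (Finset.mem_erase.mp hm').1
        have hmm' : m ∈ D.erase m' := Finset.mem_erase.mpr ⟨fun h => hm'm h.symm, hm⟩
        obtain ⟨χ', hχ'⟩ := hbd m' hm'D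
        have hFE : (D.erase m').erase m = (D.erase m).erase m' := erase_erase_comm D m' m
        have hvcyc : kd y ((D.erase m).erase m') i'
            (castKC hFE (delPart (D.erase m') m hmm' χ') + delPart (D.erase m) m' hm' χ)
            = 0 := by
          rw [map_add, castKC_kd, ← delPart_kd y hmm' i' χ', hχ',
            ← delPart_kd y hm' i' χ, hχ,
            delPart_delPart hm'm hm'D hm w]
          exact add_neg_cancel _
        obtain ⟨ψ, hψ⟩ := hB ((D.erase m).erase m') m
          (castKC hFE (delPart (D.erase m') m hmm' χ') + delPart (D.erase m) m' hm' χ) hvcyc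
        refine ⟨castKC hFE (resKC (Finset.erase_subset m (D.erase m')) χ')
          + ((-1 : ℤ) ^ (i' + 1)) • ψ, ?_⟩
        rw [map_add, map_zsmul, hψ, castKC_kd]
        calc castKC hFE (kd y ((D.erase m').erase m) (i' + 1)
                (resKC (Finset.erase_subset m (D.erase m')) χ'))
              + ((-1 : ℤ) ^ (i' + 1)) • (y m •
                (castKC hFE (delPart (D.erase m') m hmm' χ')
                  + delPart (D.erase m) m' hm' χ))
            = castKC hFE (kd y ((D.erase m').erase m) (i' + 1)
                  (resKC (Finset.erase_subset m (D.erase m')) χ')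
                + ((-1 : ℤ) ^ (i' + 1)) • (y m • delPart (D.erase m') m hmm' χ'))
              + ((-1 : ℤ) ^ (i' + 1)) • (y m • delPart (D.erase m) m' hm' χ) := by
              rw [castKC_add, castKC_zsmul, castKC_smul, smul_add, smul_add]
              exact (add_assoc _ _ _).symm
          _ = castKC hFE (resKC (Finset.erase_subset m (D.erase m'))
                  (kd y (D.erase m') (i' + 1) χ'))
              + ((-1 : ℤ) ^ (i' + 1)) • (y m • delPart (D.erase m) m' hm' χ) := by
              rw [res_kd y hmm' (i' + 1) χ']
          _ = resKC (Finset.erase_subset_erase m' (Finset.erase_subset m D))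
                (delPart D m' hm'D w)
              + ((-1 : ℤ) ^ (i' + 1)) • (y m • delPart (D.erase m) m' hm' χ) := by
              rw [hχ', resKC_congr_set hFE (Finset.erase_subset m (D.erase m'))
                (Finset.erase_subset_erase m' (Finset.erase_subset m D))]
          _ = delPart (D.erase m) m' hm' (resKC (Finset.erase_subset m D) w
              + ((-1 : ℤ) ^ (i' + 1)) • (y m • χ)) := by
              rw [delPart_add hm', delPart_zsmul hm', delPart_smul hm',
                delPart_resKC hm'm hm'D w]
      obtain ⟨x', hx'⟩ := IH (D.erase m) (Finset.erase_ssubset hm)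
        (resKC (Finset.erase_subset m D) w + ((-1 : ℤ) ^ (i' + 1)) • (y m • χ)) hw'cyc hbd'
      refine ⟨extKC m x' + wedgeKC m χ, ?_⟩
      rw [map_add, kd_extKC y hm (i' + 1) x', hx', ← hrecon]

lemma mem_kCyc_succ (y : ι → R) (A : Finset ι) (n : ℕ) (v : KChain ι A M (n + 1)) :
    v ∈ kCyc y A M (n + 1) ↔ kd y A n v = 0 := by
  simp only [kCyc]
  exact LinearMap.mem_ker

lemma mem_kBnd (y : ι → R) (A : Finset ι) (n : ℕ) (v : KChain ι A M (n + 1)) :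
    v ∈ kBnd y A M (n + 1) ↔ ∃ x : KChain ι A M (n + 1 + 1), kd y A (n + 1) x = v := by
  simp only [kBnd]
  exact LinearMap.mem_range

lemma main_generic (y : ι → R) (I : Ideal R) (hyI : ∀ j, y j ∈ I) (i' : ℕ)
    (hann : ∀ A : Finset ι, ∀ c ∈ I, ∀ h : KoszulH y A M (i' + 1), c • h = 0) :
    ∀ A : Finset ι, ∀ c ∈ I, ∀ h : KoszulH y A M (i' + 1 + 1), c • h = 0 := by
  have hbound : ∀ (E : Finset ι) (c : R), c ∈ I →
      ∀ v : KChain ι E M (i' + 1), kd y E i' v = 0 →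
        ∃ ψ : KChain ι E M (i' + 2), kd y E (i' + 1) ψ = c • v := by
    intro E c hc v hv
    have hv' : v ∈ kCyc y E M (i' + 1) := (mem_kCyc_succ y E i' v).mpr hv
    have h0 := hann E c hc (Submodule.Quotient.mk ⟨v, hv'⟩)
    rw [← Submodule.Quotient.mk_smul, Submodule.Quotient.mk_eq_zero,
      Submodule.mem_comap] at h0
    have h1 : c • v ∈ kBnd y E M (i' + 1) := h0
    exact (mem_kBnd y E i' (c • v)).mp h1
  intro A c hc h
  obtain ⟨⟨Z, hZ⟩, rfl⟩ := Submodule.Quotient.mk_surjective _ h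
  rw [← Submodule.Quotient.mk_smul, Submodule.Quotient.mk_eq_zero, Submodule.mem_comap]
  have hZc : kd y A (i' + 1) Z = 0 := (mem_kCyc_succ y A (i' + 1) Z).mp hZ
  obtain ⟨x, hx⟩ := key y i'
    (fun E j v hv => hbound E (y j) (hyI j) v hv)
    A (c • Z)
    (by rw [map_smul, hZc, smul_zero])
    (fun m hm => by
      have hcyc : kd y (A.erase m) i' (delPart A m hm Z) = 0 := by
        rw [← delPart_kd y hm i' Z, hZc, delPart_zero]
      obtain ⟨ψ, hψ⟩ := hbound (A.erase m) c hc (delPart A m hm Z) hcyc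
      exact ⟨ψ, by rw [hψ, delPart_smul hm]⟩)
  show (c • Z : KChain ι A M (i' + 1 + 1)) ∈ kBnd y A M (i' + 1 + 1)
  exact (mem_kBnd y A (i' + 1) (c • Z)).mpr ⟨x, hx⟩

end KoszulAux

end Aux




/-- **Corollary (annihilation of Koszul homology propagates upwards).**
Let `R` be a commutative ring, `M` an `R`-module, `y 1, …, y r ∈ R` and `I` an ideal of `R`
containing `(y 1, …, y r)`.  Fix `i > 0`.  If `I • H_i(y_A; M) = 0` for all subsets
`A ⊆ {1,…,r}`, then `I • H_{i+1}(y_A; M) = 0` for all subsets `A ⊆ {1,…,r}`. -/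
theorem ideal_annihilates_next_koszul_homology
    {R : Type*} [CommRing R] {M : Type*} [AddCommGroup M] [Module R M]
    (r : ℕ) (y : Fin r → R) (I : Ideal R) (hyI : ∀ j, y j ∈ I) (i : ℕ) (hi : 0 < i)
    (hann : ∀ A : Finset (Fin r), ∀ c ∈ I, ∀ h : KoszulH y A M i, c • h = 0) :
    ∀ A : Finset (Fin r), ∀ c ∈ I, ∀ h : KoszulH y A M (i + 1), c • h = 0 := by
  obtain ⟨i', rfl⟩ : ∃ i', i = i' + 1 := ⟨i - 1, (Nat.succ_pred_eq_of_pos hi).symm⟩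
  exact KoszulAux.main_generic y I hyI i' hann
end
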